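/- Let f : ℝ^d → ℝ be a differentiable function whose infimum f* is attained. If f satisfies the PL condition with parameter μ > 0, then f satisfies an error bound: there exists a constant ν > 0 such that for every x ∈ ℝ^d there is a global minimizer x_p of f with ‖∇f(x)‖ ≥ ν·‖x − x_p‖. -/

import Mathlib

/-- **PL implies an error bound.** If a differentiable `f : ℝ^d → ℝ` with attained infimum
`fstar` satisfies the PL condition with parameter `μ > 0`, then there is `ν > 0` such that
for every `x` there is a global minimizer `xp` with `‖∇f(x)‖ ≥ ν‖x − xp‖`. -/
theorem pl_implies_error_bound (d : ℕ) (f : EuclideanSpace ℝ (Fin d) → ℝ) (fstar : ℝ) (μ : ℝ)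
    (hdiff : Differentiable ℝ f)
    (hattained : ∃ xmin, f xmin = fstar)
    (hlb : ∀ x, fstar ≤ f x)
    (hμ : 0 < μ)
    (hPL : ∀ x, μ * (f x - fstar) ≤ ‖gradient f x‖ ^ 2) :
    ∃ ν > (0 : ℝ), ∀ x, ∃ xp, f xp = fstar ∧ ν * ‖x - xp‖ ≤ ‖gradient f x‖ := by
  have hsqμ : 0 < Real.sqrt μ := Real.sqrt_pos.2 hμ
  set c : ℝ := Real.sqrt μ / 4 with hc
  have hcpos : 0 < c := by positivity
  set g : EuclideanSpace ℝ (Fin d) → ℝ := fun z => Real.sqrt (f z - fstar) with hg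
  have hgnonneg : ∀ z, 0 ≤ g z := fun z => Real.sqrt_nonneg _
  have hgcont : Continuous g :=
    Real.continuous_sqrt.comp (hdiff.continuous.sub continuous_const)
  -- lower bound on gradient norm from PL
  have hgradlb : ∀ z, Real.sqrt μ * g z ≤ ‖gradient f z‖ := by
    intro z
    have h1 : 0 ≤ f z - fstar := sub_nonneg.2 (hlb z)
    have : Real.sqrt (μ * (f z - fstar)) ≤ ‖gradient f z‖ := by
      rw [show ‖gradient f z‖ = Real.sqrt (‖gradient f z‖ ^ 2) by
        rw [Real.sqrt_sq (norm_nonneg _)]]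
      exact Real.sqrt_le_sqrt (hPL z)
    rwa [Real.sqrt_mul hμ.le] at this
  refine ⟨μ / 4, by positivity, fun x => ?_⟩
  -- minimize h z = g z + c‖z - x‖
  set h : EuclideanSpace ℝ (Fin d) → ℝ := fun z => g z + c * ‖z - x‖ with hh
  have hhcont : Continuous h :=
    hgcont.add (continuous_const.mul ((continuous_id.sub continuous_const).norm))
  have hcoer : Filter.Tendsto h (Filter.cocompact _) Filter.atTop := by
    apply Filter.tendsto_atTop_mono
      (f := fun z => c * ‖z‖ - c * ‖x‖)
    · intro z
      have : ‖z‖ - ‖x‖ ≤ ‖z - x‖ := norm_sub_norm_le z x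
      have h2 : c * (‖z‖ - ‖x‖) ≤ c * ‖z - x‖ := by
        exact mul_le_mul_of_nonneg_left this hcpos.le
      have := hgnonneg z
      simp only [hh]
      nlinarith
    · apply Filter.tendsto_atTop_add_const_right
      exact (tendsto_norm_cocompact_atTop.const_mul_atTop hcpos)
  obtain ⟨y, hy⟩ := hhcont.exists_forall_le hcoer
  -- y is a global minimizer of f
  have hgy : g y = 0 := by
    by_contra hne
    have hgypos : 0 < g y := lt_of_le_of_ne (hgnonneg y) (Ne.symm hne)
    have hs : 0 < f y - fstar := by
      by_contra hs
      push_neg at hs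
      have : f y - fstar = 0 := le_antisymm hs (sub_nonneg.2 (hlb y))
      simp [hg, this] at hgypos
    -- g is differentiable at y with gradient G
    set s : ℝ := f y - fstar with hsdef
    have hsqrt : HasDerivAt Real.sqrt (1 / (2 * Real.sqrt s)) s :=
      Real.hasDerivAt_sqrt hs.ne'
    have hfd : HasFDerivAt (fun z => f z - fstar) (fderiv ℝ f y) y :=
      ((hdiff y).hasFDerivAt).sub_const fstar
    have hgd : HasFDerivAt g ((1 / (2 * Real.sqrt s)) • fderiv ℝ f y) y :=
      hsqrt.comp_hasFDerivAt y hfd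
    have hfderiv_eq : fderiv ℝ f y = InnerProductSpace.toDual ℝ _ (gradient f y) := by
      rw [gradient, LinearIsometryEquiv.apply_symm_apply]
    set G : EuclideanSpace ℝ (Fin d) :=
      (1 / (2 * Real.sqrt s)) • gradient f y with hG
    have hgd' : HasFDerivAt g (InnerProductSpace.toDual ℝ _ G) y := by
      rw [hG, map_smul]
      rw [hfderiv_eq] at hgd
      exact hgd
    -- G is large by PL
    have hGnorm : Real.sqrt μ / 2 ≤ ‖G‖ := by
      have h1 : ‖G‖ = (1 / (2 * Real.sqrt s)) * ‖gradient f y‖ := by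
        rw [hG, norm_smul, Real.norm_eq_abs, abs_of_pos (by positivity)]
      have h2 := hgradlb y
      have h3 : g y = Real.sqrt s := rfl
      have hsq : 0 < Real.sqrt s := Real.sqrt_pos.2 hs
      rw [h1, h3] at *
      have heq : Real.sqrt μ / 2 = (1 / (2 * Real.sqrt s)) * (Real.sqrt μ * Real.sqrt s) := by
        field_simp
      rw [heq, h1]
      exact mul_le_mul_of_nonneg_left h2 (by positivity)
    -- directional derivative along v = -G is ≥ -c‖G‖
    set v : EuclideanSpace ℝ (Fin d) := -G with hv
    have hline : HasDerivAt (fun t : ℝ => y + t • v) v 0 := by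
      simpa using ((hasDerivAt_id (0:ℝ)).smul_const v).const_add y
    have hφ : HasDerivAt (fun t : ℝ => g (y + t • v)) (-‖G‖ ^ 2) 0 := by
      have hgd'' : HasFDerivAt g (InnerProductSpace.toDual ℝ _ G) (y + (0:ℝ) • v) := by
        simpa using hgd'
      have := hgd''.comp_hasDerivAt 0 hline
      have e : (InnerProductSpace.toDual ℝ (EuclideanSpace ℝ (Fin d)) G) v = -‖G‖ ^ 2 := by
        rw [InnerProductSpace.toDual_apply_apply, hv, inner_neg_right, real_inner_self_eq_norm_sq]
      rw [e] at this
      exact this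
    -- slope bound from right
    have hslope : ∀ t : ℝ, 0 < t → -(c * ‖G‖) ≤ (g (y + t • v) - g y) / t := by
      intro t ht
      have hmin := hy (y + t • v)
      have htri : ‖y + t • v - x‖ ≤ ‖y - x‖ + t * ‖v‖ := by
        calc ‖y + t • v - x‖ = ‖(y - x) + t • v‖ := by rw [add_sub_right_comm]
          _ ≤ ‖y - x‖ + ‖t • v‖ := norm_add_le _ _
          _ = ‖y - x‖ + t * ‖v‖ := by rw [norm_smul, Real.norm_eq_abs, abs_of_pos ht]
      have hvnorm : ‖v‖ = ‖G‖ := by rw [hv, norm_neg]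
      rw [hvnorm] at htri
      have key : g y - c * (t * ‖G‖) ≤ g (y + t • v) := by
        simp only [hh] at hmin
        nlinarith [mul_le_mul_of_nonneg_left htri hcpos.le, hmin]
      rw [le_div_iff₀ ht]
      nlinarith
    have hD : -(c * ‖G‖) ≤ -‖G‖ ^ 2 := by
      have htend : Filter.Tendsto (fun t : ℝ => (g (y + t • v) - g y) / t)
          (nhdsWithin 0 (Set.Ioi 0)) (nhds (-‖G‖ ^ 2)) := by
        have := hφ.tendsto_slope_zero_right
        simp only [zero_add, smul_eq_mul, zero_smul, add_zero] at this
        refine this.congr fun t => ?_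
        rw [div_eq_inv_mul]
      refine ge_of_tendsto htend ?_
      filter_upwards [self_mem_nhdsWithin] with t ht
      exact hslope t ht
    have hGpos : 0 < ‖G‖ := lt_of_lt_of_le (by positivity) hGnorm
    have h1 : ‖G‖ * ‖G‖ ≤ c * ‖G‖ := by rw [← pow_two]; linarith
    have h2 : ‖G‖ ≤ c := le_of_mul_le_mul_right h1 hGpos
    rw [hc] at h2
    linarith
  have hfy : f y = fstar := by
    have : f y - fstar = 0 := by
      by_contra hne
      have : 0 < f y - fstar := lt_of_le_of_ne (sub_nonneg.2 (hlb y)) (Ne.symm hne)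
      have := Real.sqrt_pos.2 this
      rw [show Real.sqrt (f y - fstar) = g y from rfl, hgy] at this
      exact lt_irrefl 0 this
    linarith
  refine ⟨y, hfy, ?_⟩
  -- c‖y - x‖ ≤ g x
  have hdist : c * ‖y - x‖ ≤ g x := by
    have := hy x
    simp only [hh, hgy, sub_self, norm_zero, mul_zero, zero_add] at this
    linarith
  have hfinal := hgradlb x
  have hnorm : ‖x - y‖ = ‖y - x‖ := norm_sub_rev x y
  calc μ / 4 * ‖x - y‖ = Real.sqrt μ * (c * ‖y - x‖) := by
        rw [hnorm, hc]
        have h5 : Real.sqrt μ * Real.sqrt μ = μ := Real.mul_self_sqrt hμ.le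
        linear_combination (-‖y - x‖ / 4) * h5
    _ ≤ Real.sqrt μ * g x := mul_le_mul_of_nonneg_left hdist hsqμ.le
    _ ≤ ‖gradient f x‖ := hfinal
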